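/- Let X ⊆ ℝⁿ be convex and let γ_p : ℝⁿ → ℝ be a scoring function. Suppose the strict epistemic pooling principle holds for average pooling for all e, f ∈ X, i.e., for all e, f ∈ X, γ_p((e+f)/2) > 0 ↔ (γ_p(e) > 0 ∨ γ_p(f) > 0). Then the positive region Pos_p = {e ∈ X : γ_p(e) > 0} is a convex set. -/
import Mathlib


/-- Under the strict epistemic pooling principle for average pooling on a
convex set X, the positive region Pos_p = {e ∈ X | γ_p(e) > 0} is convex. -/
theorem avg_pooling_pos_convex (n : ℕ) (X : Set (Fin n → ℝ))
    (hX : Convex ℝ X) (γ : (Fin n → ℝ) → ℝ)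
    (hpool : ∀ e ∈ X, ∀ f ∈ X, γ ((e + f) / 2) > 0 ↔ (γ e > 0 ∨ γ f > 0)) :
    Convex ℝ {e ∈ X | γ e > 0} := by
  intro x hx y hy a b ha hb hab
  refine ⟨hX hx.1 hy.1 ha hb hab, ?_⟩
  rcases le_or_gt a (1/2) with hle | hgt
  · -- z is midpoint of w = (2a)•x + (1-2a)•y and y
    have h2a : (0:ℝ) ≤ 2*a := by linarith
    have h2a' : (0:ℝ) ≤ 1 - 2*a := by linarith
    have hw : (2*a) • x + (1 - 2*a) • y ∈ X := hX hx.1 hy.1 h2a h2a' (by ring)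
    have heq : (((2*a) • x + (1 - 2*a) • y) + y) / 2 = a • x + b • y := by
      funext i
      simp only [Pi.add_apply, Pi.div_apply, Pi.smul_apply, smul_eq_mul, Pi.ofNat_apply]
      have : b = 1 - a := by linarith
      rw [this]; ring
    have := (hpool _ hw y hy.1).mpr (Or.inr hy.2)
    rwa [heq] at this
  · -- z is midpoint of x and w = (2a-1)•x + (2b)•y
    have h1 : (0:ℝ) ≤ 2*a - 1 := by linarith
    have h2 : (0:ℝ) ≤ 2*b := by linarith
    have hw : (2*a - 1) • x + (2*b) • y ∈ X := hX hx.1 hy.1 h1 h2 (by linarith)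
    have heq : ((x + ((2*a - 1) • x + (2*b) • y)) ) / 2 = a • x + b • y := by
      funext i
      simp only [Pi.add_apply, Pi.div_apply, Pi.smul_apply, smul_eq_mul, Pi.ofNat_apply]
      ring
    have := (hpool x hx.1 _ hw).mpr (Or.inl hx.2)
    rwa [heq] at this
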